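/- (FDR reduction for heterogeneous pruning.) Let the data $\mathcal{D}$ determine values $p_j, s_j \ge 0$ and positive integers $R_j$ for $j=1,\dots,m$, and let $\xi_1,\dots,\xi_m$ be i.i.d.\ $\mathrm{Unif}[0,1]$ independent of $\mathcal{D}$. Define $r^* = \max\{r : \#\{j : p_j\le s_j,\ \xi_j R_j \le r\} \ge r\}$ and $\mathcal{R} = \{j : p_j\le s_j,\ \xi_j R_j \le r^*\}$, so $|\mathcal{R}| = r^*$. Let $N_1,\dots,N_m$ be 0-1 random variables measurable with respect to $\mathcal{D}$ (indicators of null hypotheses). Then $\mathbb{E}\Big[\frac{\sum_{j} N_j \mathbf{1}\{j\in\mathcal{R}\}}{\max(1,|\mathcal{R}|)}\Big] \le \sum_{j=1}^m \mathbb{E}\Big[\frac{N_j\,\mathbf{1}\{p_j \le s_j\}}{R_j}\Big]$. -/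

import Mathlib

open MeasureTheory ProbabilityTheory Finset
open scoped Classical

/-! ### Combinatorial layer -/

noncomputable def selC {m : ℕ} (q : Fin m → Prop) (Rv : Fin m → ℕ) (x : Fin m → ℝ) (r : ℕ) : ℕ :=
  (univ.filter fun i => q i ∧ x i * (Rv i : ℝ) ≤ (r : ℝ)).card

noncomputable def rst {m : ℕ} (q : Fin m → Prop) (Rv : Fin m → ℕ) (x : Fin m → ℝ) : ℕ :=
  Nat.findGreatest (fun r => r ≤ selC q Rv x r) m

section comb

variable {m : ℕ} {q : Fin m → Prop} {Rv : Fin m → ℕ} {x : Fin m → ℝ} {j : Fin m}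

lemma selC_le_update (r : ℕ) : selC q Rv x r ≤ selC q Rv (Function.update x j 0) r := by
  apply Finset.card_le_card
  intro i hi
  simp only [Finset.mem_filter, Finset.mem_univ, true_and] at hi ⊢
  refine ⟨hi.1, ?_⟩
  rcases eq_or_ne i j with rfl | h
  · rw [Function.update_self, zero_mul]; positivity
  · rw [Function.update_of_ne h]; exact hi.2

lemma rst_le_update : rst q Rv x ≤ rst q Rv (Function.update x j 0) :=
  Nat.findGreatest_mono (fun r hr => hr.trans (selC_le_update r)) le_rfl

lemma rst_le_selC : rst q Rv x ≤ selC q Rv x (rst q Rv x) := by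
  rcases Nat.eq_zero_or_pos (rst q Rv x) with h | h
  · rw [h]; exact Nat.zero_le _
  · exact Nat.findGreatest_of_ne_zero (P := fun r => r ≤ selC q Rv x r) (n := m) rfl h.ne'

lemma rst_update_eq (hq : q j) (hle : x j * (Rv j : ℝ) ≤ (rst q Rv x : ℝ)) :
    rst q Rv (Function.update x j 0) = rst q Rv x := by
  refine le_antisymm ?_ rst_le_update
  rcases Nat.eq_zero_or_pos (rst q Rv (Function.update x j 0)) with h0 | hpos
  · rw [h0]; exact Nat.zero_le _
  set r' := rst q Rv (Function.update x j 0) with hr'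
  have hP' : r' ≤ selC q Rv (Function.update x j 0) r' :=
    Nat.findGreatest_of_ne_zero
      (P := fun r => r ≤ selC q Rv (Function.update x j 0) r) (n := m) rfl hpos.ne'
  have hx : rst q Rv x ≤ r' := rst_le_update
  have hle' : x j * (Rv j : ℝ) ≤ (r' : ℝ) := hle.trans (by exact_mod_cast hx)
  have hcard : selC q Rv (Function.update x j 0) r' ≤ selC q Rv x r' := by
    apply Finset.card_le_card
    intro i hi
    simp only [Finset.mem_filter, Finset.mem_univ, true_and] at hi ⊢
    refine ⟨hi.1, ?_⟩
    rcases eq_or_ne i j with rfl | h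
    · exact hle'
    · rw [Function.update_of_ne h] at hi; exact hi.2
  exact Nat.le_findGreatest (hr' ▸ Nat.findGreatest_le m) (hP'.trans hcard)

lemma one_le_rst (hq : q j) (hle : x j * (Rv j : ℝ) ≤ (rst q Rv x : ℝ)) : 1 ≤ rst q Rv x := by
  rcases Nat.eq_zero_or_pos (rst q Rv x) with h0 | h; swap
  · exact h
  rw [h0] at hle
  have h1 : 1 ≤ selC q Rv x 1 := by
    refine Finset.card_pos.mpr ⟨j, ?_⟩
    simp only [Finset.mem_filter, Finset.mem_univ, true_and]
    exact ⟨hq, hle.trans (by norm_num)⟩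
  exact Nat.le_findGreatest (Nat.one_le_iff_ne_zero.mpr (by rintro rfl; exact j.elim0)) h1

lemma pointwise_bound {Nj : ℝ} (hNj : 0 ≤ Nj) :
    Nj * (if q j ∧ x j * (Rv j : ℝ) ≤ (rst q Rv x : ℝ) then (1:ℝ) else 0) /
        max 1 (selC q Rv x (rst q Rv x) : ℝ) ≤
      Nj * (if q j then (1:ℝ) else 0) *
        (if x j * (Rv j : ℝ) ≤ (rst q Rv (Function.update x j 0) : ℝ) then (1:ℝ) else 0) /
        max 1 (rst q Rv (Function.update x j 0) : ℝ) := by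
  by_cases hc : q j ∧ x j * (Rv j : ℝ) ≤ (rst q Rv x : ℝ)
  · obtain ⟨hq, hle⟩ := hc
    rw [if_pos ⟨hq, hle⟩, if_pos hq, rst_update_eq hq hle, if_pos hle]
    have h1 : (rst q Rv x : ℝ) ≤ (selC q Rv x (rst q Rv x) : ℝ) := by exact_mod_cast rst_le_selC
    have h2 : max 1 (rst q Rv x : ℝ) ≤ max 1 (selC q Rv x (rst q Rv x) : ℝ) :=
      max_le_max le_rfl h1
    rw [mul_one, mul_one]
    exact div_le_div_of_nonneg_left hNj (lt_of_lt_of_le zero_lt_one (le_max_left _ _)) h2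
  · rw [if_neg hc, mul_zero, zero_div]
    positivity

end comb

/-! ### Measurability layer -/

lemma measurable_findGreatest_comp {α : Type*} [MeasurableSpace α] {Q : α → ℕ → Prop}
    [∀ a, DecidablePred (Q a)] :
    ∀ n : ℕ, (∀ k, MeasurableSet {a | Q a k}) → Measurable fun a => Nat.findGreatest (Q a) n := by
  intro n
  induction n with
  | zero => intro _; simp only [Nat.findGreatest_zero]; exact measurable_const
  | succ n ih =>
      intro h
      have : (fun a => Nat.findGreatest (Q a) (n+1)) =
          fun a => if Q a (n+1) then n+1 else Nat.findGreatest (Q a) n := by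
        funext a; exact Nat.findGreatest_succ n
      rw [this]
      exact Measurable.ite (h (n+1)) measurable_const (ih h)

abbrev Dt (m : ℕ) := Fin m → ℝ × ℝ × ℕ × ℝ

def qd {m : ℕ} (d : Dt m) (i : Fin m) : Prop := (d i).1 ≤ (d i).2.1
def Rdd {m : ℕ} (d : Dt m) (i : Fin m) : ℕ := (d i).2.2.1
def Ndd {m : ℕ} (d : Dt m) (i : Fin m) : ℝ := (d i).2.2.2

section meas

variable {m : ℕ}

lemma meas_cond (i : Fin m) (r : ℕ) :
    MeasurableSet {z : (Fin m → ℝ) × Dt m |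
      qd z.2 i ∧ z.1 i * (Rdd z.2 i : ℝ) ≤ (r : ℝ)} := by
  have h1 : Measurable fun z : (Fin m → ℝ) × Dt m => (z.2 i).1 :=
    measurable_fst.comp ((measurable_pi_apply i).comp measurable_snd)
  have h2 : Measurable fun z : (Fin m → ℝ) × Dt m => (z.2 i).2.1 :=
    measurable_fst.comp (measurable_snd.comp ((measurable_pi_apply i).comp measurable_snd))
  have h3 : Measurable fun z : (Fin m → ℝ) × Dt m => ((z.2 i).2.2.1 : ℝ) :=
    (measurable_from_top (f := (Nat.cast : ℕ → ℝ))).comp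
      (measurable_fst.comp (measurable_snd.comp (measurable_snd.comp
        ((measurable_pi_apply i).comp measurable_snd))))
  have h4 : Measurable fun z : (Fin m → ℝ) × Dt m => z.1 i * ((z.2 i).2.2.1 : ℝ) :=
    ((measurable_pi_apply i).comp measurable_fst).mul h3
  exact (measurableSet_le h1 h2).inter (measurableSet_le h4 measurable_const)

lemma meas_selC (r : ℕ) :
    Measurable fun z : (Fin m → ℝ) × Dt m => selC (qd z.2) (Rdd z.2) z.1 r := by
  have : (fun z : (Fin m → ℝ) × Dt m => selC (qd z.2) (Rdd z.2) z.1 r) =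
      fun z => ∑ i : Fin m,
        if qd z.2 i ∧ z.1 i * (Rdd z.2 i : ℝ) ≤ (r : ℝ) then 1 else 0 := by
    funext z; simp only [selC]; rw [Finset.card_filter]
  rw [this]
  exact Finset.measurable_sum _ fun i _ =>
    Measurable.ite (meas_cond i r) measurable_const measurable_const

lemma meas_rst : Measurable fun z : (Fin m → ℝ) × Dt m => rst (qd z.2) (Rdd z.2) z.1 := by
  unfold rst
  exact measurable_findGreatest_comp (α := (Fin m → ℝ) × Dt m)
    (Q := fun z r => r ≤ selC (qd z.2) (Rdd z.2) z.1 r) m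
    (fun k => measurableSet_le measurable_const (meas_selC k))

lemma meas_Nd (j : Fin m) : Measurable fun z : (Fin m → ℝ) × Dt m => Ndd z.2 j :=
  measurable_snd.comp (measurable_snd.comp (measurable_snd.comp
    ((measurable_pi_apply j).comp measurable_snd)))

noncomputable def gfun (m : ℕ) (j : Fin m) (z : (Fin m → ℝ) × Dt m) : ℝ :=
  Ndd z.2 j *
    (if qd z.2 j ∧ z.1 j * (Rdd z.2 j : ℝ) ≤ (rst (qd z.2) (Rdd z.2) z.1 : ℝ) then (1:ℝ) else 0) /
    max 1 (selC (qd z.2) (Rdd z.2) z.1 (rst (qd z.2) (Rdd z.2) z.1) : ℝ)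

noncomputable def hfun (m : ℕ) (j : Fin m) (d : Dt m) : ℝ :=
  Ndd d j * (if qd d j then (1:ℝ) else 0) / (Rdd d j : ℝ)

lemma meas_selC_rst : Measurable fun z : (Fin m → ℝ) × Dt m =>
    selC (qd z.2) (Rdd z.2) z.1 (rst (qd z.2) (Rdd z.2) z.1) := by
  have hfun_eq : (fun z : (Fin m → ℝ) × Dt m =>
      selC (qd z.2) (Rdd z.2) z.1 (rst (qd z.2) (Rdd z.2) z.1)) =
      fun z => ∑ r ∈ Finset.range (m+1),
        if rst (qd z.2) (Rdd z.2) z.1 = r then selC (qd z.2) (Rdd z.2) z.1 r else 0 := by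
    funext z
    rw [Finset.sum_eq_single (rst (qd z.2) (Rdd z.2) z.1)]
    · rw [if_pos rfl]
    · intro r _ hr; rw [if_neg (Ne.symm hr)]
    · intro h
      exact absurd (Finset.mem_range.mpr (Nat.lt_succ_of_le (Nat.findGreatest_le m))) h
  rw [hfun_eq]
  refine Finset.measurable_sum _ fun r _ => Measurable.ite ?_ (meas_selC r) measurable_const
  exact meas_rst (MeasurableSet.singleton r)

lemma meas_gfun (j : Fin m) : Measurable (gfun m j) := by
  have hcond : MeasurableSet {z : (Fin m → ℝ) × Dt m |
      qd z.2 j ∧ z.1 j * (Rdd z.2 j : ℝ) ≤ (rst (qd z.2) (Rdd z.2) z.1 : ℝ)} := by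
    have h1 : Measurable fun z : (Fin m → ℝ) × Dt m => (z.2 j).1 :=
      measurable_fst.comp ((measurable_pi_apply j).comp measurable_snd)
    have h2 : Measurable fun z : (Fin m → ℝ) × Dt m => (z.2 j).2.1 :=
      measurable_fst.comp (measurable_snd.comp ((measurable_pi_apply j).comp measurable_snd))
    have h3 : Measurable fun z : (Fin m → ℝ) × Dt m => ((z.2 j).2.2.1 : ℝ) :=
      (measurable_from_top (f := (Nat.cast : ℕ → ℝ))).comp
        (measurable_fst.comp (measurable_snd.comp (measurable_snd.comp
          ((measurable_pi_apply j).comp measurable_snd))))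
    have h4 : Measurable fun z : (Fin m → ℝ) × Dt m => z.1 j * ((z.2 j).2.2.1 : ℝ) :=
      ((measurable_pi_apply j).comp measurable_fst).mul h3
    have h5 : Measurable fun z : (Fin m → ℝ) × Dt m =>
        ((rst (qd z.2) (Rdd z.2) z.1 : ℕ) : ℝ) :=
      (measurable_from_top (f := (Nat.cast : ℕ → ℝ))).comp meas_rst
    exact (measurableSet_le h1 h2).inter (measurableSet_le h4 h5)
  have hden : Measurable fun z : (Fin m → ℝ) × Dt m =>
      max 1 ((selC (qd z.2) (Rdd z.2) z.1 (rst (qd z.2) (Rdd z.2) z.1) : ℕ) : ℝ) :=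
    measurable_const.max
      ((measurable_from_top (f := (Nat.cast : ℕ → ℝ))).comp meas_selC_rst)
  exact ((meas_Nd j).mul
    (Measurable.ite hcond measurable_const measurable_const)).div hden

lemma meas_hfun (j : Fin m) : Measurable (hfun m j) := by
  have h1 : Measurable fun d : Dt m => (d j).1 :=
    measurable_fst.comp (measurable_pi_apply j)
  have h2 : Measurable fun d : Dt m => (d j).2.1 :=
    measurable_fst.comp (measurable_snd.comp (measurable_pi_apply j))
  have h3 : Measurable fun d : Dt m => ((d j).2.2.1 : ℝ) :=
    (measurable_from_top (f := (Nat.cast : ℕ → ℝ))).comp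
      (measurable_fst.comp (measurable_snd.comp (measurable_snd.comp (measurable_pi_apply j))))
  have h4 : Measurable fun d : Dt m => (d j).2.2.2 :=
    measurable_snd.comp (measurable_snd.comp (measurable_snd.comp (measurable_pi_apply j)))
  exact (h4.mul (Measurable.ite (measurableSet_le h1 h2) measurable_const measurable_const)).div h3

lemma gfun_abs_le {j : Fin m} {z : (Fin m → ℝ) × Dt m}
    (h : Ndd z.2 j = 0 ∨ Ndd z.2 j = 1) : ‖gfun m j z‖ ≤ 1 := by
  unfold gfun
  rw [Real.norm_eq_abs, abs_div, abs_mul,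
    abs_of_pos (lt_of_lt_of_le zero_lt_one
      (le_max_left 1 ((selC (qd z.2) (Rdd z.2) z.1 (rst (qd z.2) (Rdd z.2) z.1) : ℕ) : ℝ)))]
  rw [div_le_one (lt_of_lt_of_le zero_lt_one (le_max_left _ _))]
  have h1 : |Ndd z.2 j| ≤ 1 := by rcases h with h | h <;> simp [h]
  have h2 : |(if qd z.2 j ∧ z.1 j * (Rdd z.2 j : ℝ) ≤
      (rst (qd z.2) (Rdd z.2) z.1 : ℝ) then (1:ℝ) else 0)| ≤ 1 := by
    split <;> simp
  calc |Ndd z.2 j| * |_| ≤ 1 * 1 := mul_le_mul h1 h2 (abs_nonneg _) zero_le_one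
    _ = 1 := one_mul 1
    _ ≤ max 1 _ := le_max_left _ _

lemma hfun_abs_le {j : Fin m} {d : Dt m}
    (h : Ndd d j = 0 ∨ Ndd d j = 1) (hR : 1 ≤ Rdd d j) : ‖hfun m j d‖ ≤ 1 := by
  unfold hfun
  rw [Real.norm_eq_abs, abs_div, abs_mul]
  have hRpos : (0:ℝ) < (Rdd d j : ℝ) := by exact_mod_cast Nat.lt_of_lt_of_le Nat.zero_lt_one hR
  rw [abs_of_pos hRpos, div_le_one hRpos]
  have h1 : |Ndd d j| ≤ 1 := by rcases h with h | h <;> simp [h]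
  have h2 : |(if qd d j then (1:ℝ) else 0)| ≤ 1 := by split <;> simp
  calc |Ndd d j| * |_| ≤ 1 * 1 := mul_le_mul h1 h2 (abs_nonneg _) zero_le_one
    _ = 1 := one_mul 1
    _ ≤ (Rdd d j : ℝ) := by exact_mod_cast hR

end meas

/-! ### Core analytic bound -/

lemma inner_bound {m : ℕ} (j : Fin m) (d : Dt m)
    (hN01 : Ndd d j = 0 ∨ Ndd d j = 1) (hR1j : 1 ≤ Rdd d j) :
    ∫ x, gfun m j (x, d) ∂(Measure.pi fun _ : Fin m => volume.restrict (Set.Icc (0:ℝ) 1)) ≤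
      hfun m j d := by
  have hμ0prob : IsProbabilityMeasure (volume.restrict (Set.Icc (0:ℝ) 1)) := by
    constructor
    rw [Measure.restrict_apply_univ, Real.volume_Icc]
    norm_num
  set μ0 : Measure ℝ := volume.restrict (Set.Icc (0:ℝ) 1) with hμ0
  have hNnn : 0 ≤ Ndd d j := by rcases hN01 with h | h <;> rw [h] <;> norm_num
  have hRpos : (0:ℝ) < (Rdd d j : ℝ) := by
    have : 0 < Rdd d j := hR1j
    exact_mod_cast this
  obtain ⟨n, rfl⟩ : ∃ n, m = n + 1 := ⟨m - 1, by have := j.2; omega⟩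
  set π2 : Measure (Fin n → ℝ) := Measure.pi fun _ => μ0 with hπ2
  set EE : (ℝ × (Fin n → ℝ)) ≃ᵐ (Fin (n+1) → ℝ) :=
    (MeasurableEquiv.piFinSuccAbove (fun _ : Fin (n+1) => ℝ) j).symm with hEEdef
  have hMP : MeasurePreserving EE (μ0.prod π2) (Measure.pi fun _ : Fin (n+1) => μ0) :=
    (measurePreserving_piFinSuccAbove (fun _ : Fin (n+1) => μ0) j).symm
      (MeasurableEquiv.piFinSuccAbove (fun _ : Fin (n+1) => ℝ) j)
  have hEE : ∀ (u : ℝ) (w : Fin n → ℝ), EE (u, w) = Fin.insertNth j u w := fun u w => rfl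
  rw [← hMP.integral_comp' (fun x => gfun (n+1) j (x, d))]
  have hGint : Integrable
      (fun z : ℝ × (Fin n → ℝ) => gfun (n+1) j (EE z, d)) (μ0.prod π2) := by
    refine Integrable.mono' (integrable_const 1)
      ((meas_gfun j).comp (EE.measurable.prodMk measurable_const)).aestronglyMeasurable ?_
    filter_upwards with z
    exact gfun_abs_le hN01
  rw [integral_prod_symm _ hGint]
  have hinner : ∀ w, ∫ u, gfun (n+1) j (EE (u, w), d) ∂μ0 ≤ hfun (n+1) j d := by
    intro w
    set r0 := rst (qd d) (Rdd d) (Fin.insertNth j 0 w) with hr0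
    set C : ℝ := Ndd d j * (if qd d j then (1:ℝ) else 0) / max 1 (r0 : ℝ) with hC
    set t : ℝ := (r0 : ℝ) / (Rdd d j : ℝ) with ht
    have hCnn : 0 ≤ C := by
      rw [hC]
      apply div_nonneg (mul_nonneg hNnn (by split <;> norm_num))
        (le_trans zero_le_one (le_max_left _ _))
    have hptw : ∀ u, gfun (n+1) j (EE (u, w), d) ≤
        Set.indicator (Set.Iic t) (fun _ => C) u := by
      intro u
      have hb := pointwise_bound (q := qd d) (Rv := Rdd d)
        (x := Fin.insertNth j u w) (j := j) hNnn
      rw [Fin.update_insertNth, Fin.insertNth_apply_same, ← hr0] at hb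
      refine le_trans (le_of_eq ?_) (le_trans hb (le_of_eq ?_))
      · show gfun (n+1) j (EE (u, w), d) = _
        unfold gfun
        simp only [hEE u w, Fin.insertNth_apply_same]
      · by_cases hc : u * (Rdd d j : ℝ) ≤ (r0 : ℝ)
        · rw [if_pos hc, mul_one,
            Set.indicator_of_mem (Set.mem_Iic.mpr ((le_div_iff₀ hRpos).mpr hc)), hC]
        · rw [if_neg hc, mul_zero, zero_div,
            Set.indicator_of_notMem
              (show u ∉ Set.Iic t from
                fun hmem => hc ((le_div_iff₀ hRpos).mp (Set.mem_Iic.mp hmem)))]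
    have hint1 : Integrable (fun u => gfun (n+1) j (EE (u, w), d)) μ0 := by
      refine Integrable.mono' (integrable_const 1)
        ((meas_gfun j).comp
          (((EE.measurable.comp (measurable_id.prodMk measurable_const))).prodMk
            measurable_const)).aestronglyMeasurable ?_
      filter_upwards with u
      exact gfun_abs_le hN01
    have hint2 : Integrable (Set.indicator (Set.Iic t) (fun _ => C)) μ0 :=
      (integrable_const C).indicator measurableSet_Iic
    calc ∫ u, gfun (n+1) j (EE (u, w), d) ∂μ0
        ≤ ∫ u, Set.indicator (Set.Iic t) (fun _ => C) u ∂μ0 := integral_mono hint1 hint2 hptw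
      _ = (μ0 (Set.Iic t)).toReal • C := integral_indicator_const C measurableSet_Iic
      _ ≤ t * C := by
          rw [smul_eq_mul]
          refine mul_le_mul_of_nonneg_right ?_ hCnn
          have ht0 : 0 ≤ t := by rw [ht]; positivity
          refine ENNReal.toReal_le_of_le_ofReal ht0 ?_
          rw [hμ0, Measure.restrict_apply measurableSet_Iic]
          calc volume (Set.Iic t ∩ Set.Icc 0 1)
              ≤ volume (Set.Icc 0 t) := by
                refine measure_mono ?_
                rintro u ⟨h1, h2, _⟩
                exact ⟨h2, h1⟩
            _ ≤ ENNReal.ofReal t := by rw [Real.volume_Icc, sub_zero]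
      _ ≤ hfun (n+1) j d := by
          have heq : t * C = ((r0:ℝ) / max 1 (r0:ℝ)) *
              (Ndd d j * (if qd d j then (1:ℝ) else 0) / (Rdd d j : ℝ)) := by
            rw [ht, hC]; ring
          rw [heq]
          unfold hfun
          refine mul_le_of_le_one_left ?_ ?_
          · exact div_nonneg (mul_nonneg hNnn (by split <;> norm_num)) (Nat.cast_nonneg _)
          · rw [div_le_one (lt_of_lt_of_le zero_lt_one (le_max_left _ _))]
            exact le_max_right _ _
  calc ∫ w, (∫ u, gfun (n+1) j (EE (u, w), d) ∂μ0) ∂π2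
      ≤ ∫ _w, hfun (n+1) j d ∂π2 :=
        integral_mono hGint.integral_prod_right (integrable_const _) hinner
    _ = hfun (n+1) j d := by rw [integral_const, measureReal_def, measure_univ, ENNReal.toReal_one, one_smul]

theorem stmt8 {Ω : Type*} [MeasurableSpace Ω] (P : Measure Ω) [IsProbabilityMeasure P]
    (m : ℕ) (p s : Fin m → Ω → ℝ) (R : Fin m → Ω → ℕ) (N : Fin m → Ω → ℝ)
    (hpm : ∀ j, Measurable (p j)) (hsm : ∀ j, Measurable (s j))
    (hRm : ∀ j, Measurable (R j)) (hNm : ∀ j, Measurable (N j))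
    (hR1 : ∀ j ω, 1 ≤ R j ω) (hN : ∀ j ω, N j ω = 0 ∨ N j ω = 1)
    (ξ : Fin m → Ω → ℝ) (hξm : ∀ j, Measurable (ξ j))
    (hξlaw : ∀ j, Measure.map (ξ j) P = volume.restrict (Set.Icc 0 1))
    (hξindep : iIndepFun ξ P)
    (hindep : IndepFun (fun ω => fun j => ξ j ω)
      (fun ω => fun j => (p j ω, s j ω, R j ω, N j ω)) P) :
    ∀ rstar : Ω → ℕ, rstar = (fun ω => Nat.findGreatest
        (fun r => r ≤ (univ.filter
          (fun j => p j ω ≤ s j ω ∧ ξ j ω * R j ω ≤ r)).card) m) →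
    ∀ Rsel : Ω → Finset (Fin m), Rsel = (fun ω =>
        univ.filter (fun j => p j ω ≤ s j ω ∧ ξ j ω * R j ω ≤ rstar ω)) →
      ∫ ω, (∑ j, N j ω * (if j ∈ Rsel ω then (1 : ℝ) else 0)) /
          max 1 ((Rsel ω).card : ℝ) ∂P ≤
        ∑ j, ∫ ω, N j ω * (if p j ω ≤ s j ω then (1 : ℝ) else 0) / (R j ω : ℝ) ∂P := by
  intro rstar hrstar Rsel hRsel
  subst hRsel; subst hrstar
  set data : Ω → Dt m := fun ω j => (p j ω, s j ω, R j ω, N j ω) with hdata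
  set ξv : Ω → (Fin m → ℝ) := fun ω j => ξ j ω with hξv
  have hdatam : Measurable data :=
    measurable_pi_lambda _ fun j =>
      ((hpm j).prodMk ((hsm j).prodMk ((hRm j).prodMk (hNm j))))
  have hξvm : Measurable ξv := measurable_pi_lambda _ fun j => hξm j
  have hμ0prob : IsProbabilityMeasure (volume.restrict (Set.Icc (0:ℝ) 1)) := by
    constructor
    rw [Measure.restrict_apply_univ, Real.volume_Icc]
    norm_num
  set μpi : Measure (Fin m → ℝ) :=
    Measure.pi (fun _ : Fin m => volume.restrict (Set.Icc (0:ℝ) 1)) with hμpi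
  set ν : Measure (Dt m) := P.map data with hν
  have hνprob : IsProbabilityMeasure ν := Measure.isProbabilityMeasure_map hdatam.aemeasurable
  -- law of the uniform vector
  have hmapξ : P.map ξv = μpi := by
    refine (Measure.pi_eq fun sets hs => ?_).symm
    rw [Measure.map_apply hξvm (MeasurableSet.univ_pi hs)]
    have hpre : ξv ⁻¹' (Set.pi Set.univ sets) =
        ⋂ i ∈ (Finset.univ : Finset (Fin m)), ξ i ⁻¹' sets i := by
      ext ω; simp [hξv, Set.mem_pi]
    rw [hpre, hξindep.measure_inter_preimage_eq_mul Finset.univ (fun i _ => hs i)]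
    refine Finset.prod_congr rfl fun i _ => ?_
    rw [← hξlaw i, Measure.map_apply (hξm i) (hs i)]
  have hprodmap : P.map (fun ω => (ξv ω, data ω)) = μpi.prod ν := by
    rw [← hmapξ, hν]
    exact (indepFun_iff_map_prod_eq_prod_map_map
      hξvm.aemeasurable hdatam.aemeasurable).mp hindep
  -- the good event on data space
  have key : ∀ j : Fin m,
      ∫ ω, gfun m j (ξv ω, data ω) ∂P ≤ ∫ ω, hfun m j (data ω) ∂P := by
    intro j
    have hSm : MeasurableSet {d : Dt m | (Ndd d j = 0 ∨ Ndd d j = 1) ∧ 1 ≤ Rdd d j} := by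
      have hN' : Measurable fun d : Dt m => Ndd d j :=
        measurable_snd.comp (measurable_snd.comp (measurable_snd.comp (measurable_pi_apply j)))
      have hR' : Measurable fun d : Dt m => Rdd d j :=
        measurable_fst.comp (measurable_snd.comp (measurable_snd.comp (measurable_pi_apply j)))
      exact ((hN' (measurableSet_singleton 0)).union (hN' (measurableSet_singleton 1))).inter
        (hR' measurableSet_Ici)
    have hνS : ∀ᵐ d ∂ν, (Ndd d j = 0 ∨ Ndd d j = 1) ∧ 1 ≤ Rdd d j := by
      rw [hν, ae_map_iff hdatam.aemeasurable hSm]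
      filter_upwards with ω
      exact ⟨hN j ω, hR1 j ω⟩
    have hzae : ∀ᵐ z : (Fin m → ℝ) × Dt m ∂(μpi.prod ν),
        (Ndd z.2 j = 0 ∨ Ndd z.2 j = 1) ∧ 1 ≤ Rdd z.2 j := by
      rw [ae_iff]
      have hset : {z : (Fin m → ℝ) × Dt m |
          ¬ ((Ndd z.2 j = 0 ∨ Ndd z.2 j = 1) ∧ 1 ≤ Rdd z.2 j)} =
          Set.univ ×ˢ {d : Dt m | (Ndd d j = 0 ∨ Ndd d j = 1) ∧ 1 ≤ Rdd d j}ᶜ := by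
        ext z; simp
      rw [hset, Measure.prod_prod, measure_univ, one_mul]
      exact ae_iff.mp hνS
    have hgint : Integrable (gfun m j) (μpi.prod ν) := by
      refine Integrable.mono' (integrable_const 1) (meas_gfun j).aestronglyMeasurable ?_
      filter_upwards [hzae] with z hz
      exact gfun_abs_le hz.1
    have hhint : Integrable (hfun m j) ν := by
      refine Integrable.mono' (integrable_const 1) (meas_hfun j).aestronglyMeasurable ?_
      filter_upwards [hνS] with d hd
      exact hfun_abs_le hd.1 hd.2
    calc ∫ ω, gfun m j (ξv ω, data ω) ∂P
        = ∫ z, gfun m j z ∂(μpi.prod ν) := by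
          rw [← hprodmap,
            integral_map (hξvm.prodMk hdatam).aemeasurable (meas_gfun j).aestronglyMeasurable]
      _ = ∫ d, (∫ x, gfun m j (x, d) ∂μpi) ∂ν := integral_prod_symm _ hgint
      _ ≤ ∫ d, hfun m j d ∂ν := by
          refine integral_mono_ae hgint.integral_prod_right hhint ?_
          filter_upwards [hνS] with d hd
          exact inner_bound j d hd.1 hd.2
      _ = ∫ ω, hfun m j (data ω) ∂P := by
          rw [hν, integral_map hdatam.aemeasurable (meas_hfun j).aestronglyMeasurable]
  -- integrability of the pieces over Ω
  have hintΩ : ∀ j : Fin m, Integrable (fun ω => gfun m j (ξv ω, data ω)) P := by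
    intro j
    refine Integrable.mono' (integrable_const 1)
      ((meas_gfun j).comp (hξvm.prodMk hdatam)).aestronglyMeasurable ?_
    filter_upwards with ω
    exact gfun_abs_le (z := (ξv ω, data ω)) (hN j ω)
  -- translate the LHS and conclude
  trans ∫ ω, ∑ j, gfun m j (ξv ω, data ω) ∂P
  · apply le_of_eq
    apply integral_congr_ae
    filter_upwards with ω
    rw [Finset.sum_div]
    refine Finset.sum_congr rfl fun j _ => ?_
    have hB : ∀ r : ℕ, selC (qd (data ω)) (Rdd (data ω)) (ξv ω) r =
        (univ.filter (fun i => p i ω ≤ s i ω ∧ ξ i ω * (R i ω : ℝ) ≤ (r : ℝ))).card := by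
      intro r
      unfold selC
      exact congrArg Finset.card (Finset.filter_congr fun i _ => Iff.rfl)
    have hA : rst (qd (data ω)) (Rdd (data ω)) (ξv ω) =
        Nat.findGreatest (fun r => r ≤ (univ.filter
          (fun i => p i ω ≤ s i ω ∧ ξ i ω * (R i ω : ℝ) ≤ (r : ℝ))).card) m := by
      unfold rst
      simp only [hB]
    show _ = gfun m j (ξv ω, data ω)
    unfold gfun
    simp only [hA, hB]
    simp [Finset.mem_filter, qd, Ndd, Rdd, hdata, hξv]
  trans ∑ j, ∫ ω, hfun m j (data ω) ∂P
  · rw [integral_finset_sum _ (fun j _ => hintΩ j)]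
    exact Finset.sum_le_sum fun j _ => key j
  · apply le_of_eq
    refine Finset.sum_congr rfl fun j _ => ?_
    apply integral_congr_ae
    filter_upwards with ω
    show hfun m j (data ω) = _
    unfold hfun
    by_cases h : p j ω ≤ s j ω
    · rw [if_pos h, if_pos (show qd (data ω) j from h)]; rfl
    · rw [if_neg h, if_neg (show ¬ qd (data ω) j from h)]; rfl
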